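/- arXiv:1911.06215 — 3 statements merged into one kernel-verified Lean document; each statement's English description precedes it below -/
import Mathlib

section
/- Fix points x_1,…,x_n ∈ ℝ^d, functions h_1,…,h_W ∈ L²(ℝ^d) that form an orthonormal system (⟨h_i,h_j⟩ = 1 if i = j and 0 otherwise), nonnegative weights ω_1,…,ω_W and a constant c > 0. Set β̃_j := (1/n)Σ_{i=1}^n h_j(x_i). Then the unique minimizer β̂ over ℝ^W of the CSDE objective F(β) = −(2/n)Σ_{i=1}^n h_β(x_i) + ‖h_β‖² + 2Σ_{j=1}^W ω_j|β_j| + cΣ_{j=1}^W β_j² is given coordinatewise by the soft-threshold formula β̂_j = (1 − ω_j/|β̃_j|)_+ · β̃_j/(1+c) when β̃_j ≠ 0, and β̂_j = 0 when β̃_j = 0, where (x)_+ := max(0,x). -/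
open MeasureTheory Finset

lemma soft_key (a w b : ℝ) (ha : 0 < a) (hw : 0 ≤ w) (t s : ℝ)
    (hs : s = if b = 0 then 0 else max 0 (1 - w / |b|) * b / a) :
    a*s^2 - 2*b*s + 2*w*|s| + a*(t-s)^2 ≤ a*t^2 - 2*b*t + 2*w*|t| := by
  have key : 0 ≤ (a*s - b)*(t - s) + w*(|t| - |s|) := by
    by_cases hb : b = 0
    · simp only [hb, if_pos] at hs
      simp [hs, hb]
      positivity
    · rw [if_neg hb] at hs
      have hab : 0 < |b| := abs_pos.mpr hb
      by_cases hwb : |b| ≤ w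
      · have : 1 - w / |b| ≤ 0 := by
          rw [sub_nonpos, le_div_iff₀ hab]; linarith
        rw [max_eq_left this] at hs
        simp only [hs, zero_mul, zero_div] at *
        simp only [abs_zero, sub_zero, mul_zero, zero_sub, zero_mul]
        have h1 : b * t ≤ |b| * |t| := le_trans (le_abs_self _) (by rw [abs_mul])
        nlinarith [abs_nonneg t]
      · push_neg at hwb
        have hpos : 0 < 1 - w / |b| := by
          rw [sub_pos, div_lt_iff₀ hab]; linarith
        rw [max_eq_right hpos.le] at hs
        have has : a * s = (1 - w / |b|) * b := by rw [hs]; field_simp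
        have hsign : |s| = (1 - w / |b|) * |b| / a := by
          rw [hs, abs_div, abs_mul, abs_of_pos hpos, abs_of_pos ha]
        have hasb : a * s - b = -(w / |b|) * b := by rw [has]; ring
        have hbt : b * t ≤ |b| * |t| := le_trans (le_abs_self _) (by rw [abs_mul])
        have hbs : b * s = |b| * |s| := by
          rw [hsign, hs]; linear_combination (-((1 - w / |b|) / a)) * (abs_mul_abs_self b)
        rw [hasb]
        have expand : -(w / |b|) * b * (t - s) + w * (|t| - |s|)
            = (w / |b|) * ((|b| * |t| - b * t) + (b*s - |b| * |s|)) := by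
          field_simp; ring
        rw [expand]
        have h0 : 0 ≤ w / |b| := div_nonneg hw hab.le
        nlinarith [hbt, hbs]
  have hid : a*t^2 - 2*b*t + 2*w*|t| - (a*s^2 - 2*b*s + 2*w*|s| + a*(t-s)^2)
      = 2*((a*s - b)*(t - s) + w*(|t| - |s|)) := by ring
  linarith

/-- For an orthonormal dictionary, the CSDE objective has a unique
minimizer, given coordinatewise by the soft-threshold formula. -/
theorem csde_orthonormal_soft_threshold {d W n : ℕ} (hn : 0 < n)
    (x : Fin n → (Fin d → ℝ))
    (h : Fin W → (Fin d → ℝ) → ℝ)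
    (hL2 : ∀ j, MemLp (h j) 2 (volume : Measure (Fin d → ℝ)))
    (horth : ∀ i j : Fin W, (∫ y, h i y * h j y) = if i = j then (1 : ℝ) else 0)
    (ω : Fin W → ℝ) (hω : ∀ j, 0 ≤ ω j)
    (c : ℝ) (hc : 0 < c)
    (F : (Fin W → ℝ) → ℝ)
    (hF : ∀ β : Fin W → ℝ, F β =
        -(2 / (n : ℝ)) * (∑ i, ∑ j, β j * h j (x i))
        + (∫ y, (∑ j, β j * h j y) ^ 2)
        + 2 * (∑ j, ω j * |β j|) + c * (∑ j, (β j) ^ 2))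
    (btil : Fin W → ℝ)
    (hbtil : ∀ j, btil j = (1 / (n : ℝ)) * ∑ i, h j (x i))
    (bhat : Fin W → ℝ)
    (hbhat : ∀ j, bhat j =
      if btil j = 0 then 0 else (max 0 (1 - ω j / |btil j|)) * btil j / (1 + c)) :
    (∀ β : Fin W → ℝ, F bhat ≤ F β) ∧
      (∀ β' : Fin W → ℝ, (∀ β : Fin W → ℝ, F β' ≤ F β) → β' = bhat) := by
  have hn' : (n : ℝ) ≠ 0 := Nat.cast_ne_zero.mpr hn.ne'
  have ha : (0:ℝ) < 1 + c := by linarith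
  have hint : ∀ i j : Fin W, Integrable (fun y => h i y * h j y) volume := by
    intro i j
    have := memLp_one_iff_integrable.mp ((hL2 i).smul (hL2 j) (p := 2) (q := 2) (r := 1))
    exact (by simpa [smul_eq_mul, mul_comm] using this : Integrable (h i * h j) volume)
  -- the integral of the square equals the sum of squares
  have hIsum : ∀ (β : Fin W → ℝ), (∫ y, (∑ j, β j * h j y)^2) = ∑ j, (β j)^2 := by
    intro β
    have h1 : ∀ y, (∑ j, β j * h j y)^2 = ∑ i, ∑ j, (β i * β j) * (h i y * h j y) := by
      intro y; rw [sq, Finset.sum_mul_sum]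
      exact Finset.sum_congr rfl fun i _ => Finset.sum_congr rfl fun j _ => by ring
    simp_rw [h1]
    rw [integral_finset_sum _ (fun i _ =>
      integrable_finset_sum _ (fun j _ => ((hint i j).const_mul _)))]
    have h2 : ∀ i ∈ Finset.univ, (∫ y, ∑ j, (β i * β j) * (h i y * h j y))
        = ∑ j, β i * β j * (if i = j then (1:ℝ) else 0) := by
      intro i _
      rw [integral_finset_sum _ (fun j _ => (hint i j).const_mul _)]
      exact Finset.sum_congr rfl fun j _ => by rw [MeasureTheory.integral_const_mul, horth]
    rw [Finset.sum_congr rfl h2]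
    refine Finset.sum_congr rfl fun i _ => ?_
    rw [Finset.sum_eq_single i (fun j _ hj => by simp [Ne.symm hj]) (by simp)]
    simp [sq]
  -- coordinatewise decomposition
  have hFd : ∀ β : Fin W → ℝ, F β
      = ∑ j, ((1+c) * (β j)^2 - 2 * btil j * β j + 2 * ω j * |β j|) := by
    intro β
    rw [hF, hIsum]
    have hlin : -(2 / (n:ℝ)) * (∑ i, ∑ j, β j * h j (x i))
        = ∑ j, -(2 * btil j * β j) := by
      rw [Finset.sum_comm, Finset.mul_sum]
      refine Finset.sum_congr rfl fun j _ => ?_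
      rw [← Finset.mul_sum, hbtil]
      ring
    rw [hlin, Finset.mul_sum, Finset.mul_sum, ← Finset.sum_add_distrib,
      ← Finset.sum_add_distrib, ← Finset.sum_add_distrib]
    exact Finset.sum_congr rfl fun j _ => by ring
  -- the key coordinatewise inequality, summed
  have main : ∀ β : Fin W → ℝ,
      F bhat + (1+c) * ∑ j, (β j - bhat j)^2 ≤ F β := by
    intro β
    rw [hFd, hFd, Finset.mul_sum, ← Finset.sum_add_distrib]
    refine Finset.sum_le_sum fun j _ => ?_
    have := soft_key (1+c) (ω j) (btil j) ha (hω j) (β j) (bhat j) (hbhat j)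
    linarith
  constructor
  · intro β
    have h1 := main β
    have h2 : 0 ≤ ∑ j, (β j - bhat j)^2 := Finset.sum_nonneg fun j _ => sq_nonneg _
    nlinarith
  · intro β' hmin
    have h1 := main β'
    have h2 := hmin bhat
    have h3 : 0 ≤ ∑ j, (β' j - bhat j)^2 := Finset.sum_nonneg fun j _ => sq_nonneg _
    have hS : ∑ j, (β' j - bhat j)^2 = 0 := by nlinarith
    funext j
    have := (Finset.sum_eq_zero_iff_of_nonneg (fun j _ => sq_nonneg (β' j - bhat j))).mp hS
      j (Finset.mem_univ j)
    have := pow_eq_zero_iff (n := 2) (by norm_num) |>.mp this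
    linarith [sub_eq_zero.mp this]
end

section
/- Let X_1,…,X_n be ℝ^d-valued random variables with common density h ∈ L²(ℝ^d), so that E[h_j(X_1)] = ⟨h_j,h⟩ for each j, where h_1,…,h_W ∈ L²(ℝ^d) satisfy 0 ≤ h_j ≤ L_j with 0 < L_j < ∞. Let 0 < δ < 1, B > 0, v := √(log(2W/δ)/n), ω̃_j := 2√2·L_j·v, c := (min_{1≤j≤W} ω̃_j)/B and ω_j := ω̃_j + cB. Let β̂ be a minimizer over ℝ^W of the CSDE objective F(β) = −(2/n)Σ_{i=1}^n h_β(X_i) + ‖h_β‖² + 2Σ_{j=1}^W ω_j|β_j| + cΣ_{j=1}^W β_j². Then for any β ∈ ℝ^W with max_{1≤j≤W}|β_j| ≤ B, on the event 𝓔 = ∩_{j=1}^W {2|M_j| ≤ ω̃_j}, where M_j := (1/n)Σ_{i=1}^n (h_j(X_i) − E[h_j(X_i)]), it holds that ‖h_β̂ − h‖² + Σ_{j=1}^W ω̃_j|β̂_j − β_j| + cΣ_{j=1}^W (β̂_j − β_j)² ≤ ‖h_β − h‖² + 6Σ_{j∈I(β)} ω_j|β̂_j − β_j|. -/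
open MeasureTheory Finset ProbabilityTheory
open scoped ENNReal

lemma l2_mul_integrable {α : Type*} [MeasurableSpace α] {μ : Measure α} {f g : α → ℝ}
    (hf : MemLp f 2 μ) (hg : MemLp g 2 μ) : Integrable (fun x => f x * g x) μ := by
  have h1 : (1 : ℝ≥0∞) / 1 = 1 / 2 + 1 / 2 := by
    rw [ENNReal.div_add_div_same, one_add_one_eq_two,
      ENNReal.div_self two_ne_zero ENNReal.ofNat_ne_top, div_one]
  have := (hg.smul hf : MemLp (f • g) 1 μ)
  rw [memLp_one_iff_integrable] at this
  exact this

/-- Lemma 3: on the event 𝓔 = ∩_j {2|M_j| ≤ ω̃_j}, the CSDE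
minimizer satisfies the basic oracle-type inequality. -/
theorem csde_basic_oracle_on_event {d W n : ℕ} (hn : 0 < n) (hW : 0 < W)
    {Ω : Type*} [MeasurableSpace Ω] (μ : Measure Ω) [IsProbabilityMeasure μ]
    (X : Fin n → Ω → (Fin d → ℝ)) (hXm : ∀ i, Measurable (X i))
    (h : Fin W → (Fin d → ℝ) → ℝ)
    (hL2 : ∀ j, MemLp (h j) 2 (volume : Measure (Fin d → ℝ)))
    (L : Fin W → ℝ) (hLpos : ∀ j, 0 < L j)
    (hbd : ∀ j y, 0 ≤ h j y ∧ h j y ≤ L j)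
    -- the common density of the Xᵢ
    (hh : (Fin d → ℝ) → ℝ) (hhL2 : MemLp hh 2 (volume : Measure (Fin d → ℝ)))
    (hXdens : ∀ i, μ.map (X i)
      = (volume : Measure (Fin d → ℝ)).withDensity (fun y => ENNReal.ofReal (hh y)))
    (hE : ∀ j i, (∫ ω, h j (X i ω) ∂μ) = ∫ y, h j y * hh y)
    (δ : ℝ) (hδ0 : 0 < δ) (hδ1 : δ < 1) (B : ℝ) (hB : 0 < B)
    (v : ℝ) (hv : v = Real.sqrt (Real.log (2 * W / δ) / n))
    (omt : Fin W → ℝ) (homt : ∀ j, omt j = 2 * Real.sqrt 2 * L j * v)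
    (c : ℝ) (hc : c = (Finset.univ.inf' ⟨⟨0, hW⟩, Finset.mem_univ _⟩ omt) / B)
    (ωw : Fin W → ℝ) (hωw : ∀ j, ωw j = omt j + c * B)
    (F : Ω → (Fin W → ℝ) → ℝ)
    (hF : ∀ ω (β : Fin W → ℝ), F ω β =
        -(2 / (n : ℝ)) * (∑ i, ∑ j, β j * h j (X i ω))
        + (∫ y, (∑ j, β j * h j y) ^ 2)
        + 2 * (∑ j, ωw j * |β j|) + c * (∑ j, (β j) ^ 2))
    (bhat : Ω → Fin W → ℝ)
    (hmin : ∀ ω (β : Fin W → ℝ), F ω (bhat ω) ≤ F ω β)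
    (M : Fin W → Ω → ℝ)
    (hM : ∀ j ω, M j ω = (1 / (n : ℝ)) * ∑ i, (h j (X i ω) - ∫ ω', h j (X i ω') ∂μ)) :
    ∀ β : Fin W → ℝ, (∀ j, |β j| ≤ B) →
      ∀ ω : Ω, (∀ j : Fin W, 2 * |M j ω| ≤ omt j) →
        (∫ y, (∑ j, bhat ω j * h j y - hh y) ^ 2)
          + (∑ j, omt j * |bhat ω j - β j|) + c * (∑ j, (bhat ω j - β j) ^ 2)
        ≤ (∫ y, (∑ j, β j * h j y - hh y) ^ 2)
          + 6 * ∑ j ∈ Finset.filter (fun j => β j ≠ 0) Finset.univ, ωw j * |bhat ω j - β j| := by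
  intro β hβB ω hev
  have hn' : (n : ℝ) ≠ 0 := Nat.cast_ne_zero.mpr hn.ne'
  -- positivity facts
  have hv0 : 0 ≤ v := hv ▸ Real.sqrt_nonneg _
  have homt0 : ∀ j, 0 ≤ omt j := fun j => by
    rw [homt j]
    have hL := (hLpos j).le
    have h2 : (0:ℝ) ≤ Real.sqrt 2 := Real.sqrt_nonneg _
    positivity
  have hcB : c * B = Finset.univ.inf' ⟨⟨0, hW⟩, Finset.mem_univ _⟩ omt := by
    rw [hc]; field_simp
  have hcBle : ∀ j, c * B ≤ omt j := fun j => by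
    rw [hcB]; exact Finset.inf'_le _ (Finset.mem_univ j)
  have hc0 : 0 ≤ c := by
    rw [hc]
    exact div_nonneg (Finset.le_inf' _ _ fun j _ => homt0 j) hB.le
  set T : Fin W → ℝ := fun j => ∫ y, h j y * hh y with hT
  -- Claim 1: expansion of the L² norm of h_γ
  have claim1 : ∀ γ : Fin W → ℝ,
      (∫ y, (∑ j, γ j * h j y) ^ 2)
        = (∫ y, (∑ j, γ j * h j y - hh y) ^ 2) - (∫ y, (hh y) ^ 2)
          + 2 * ∑ j, γ j * T j := by
    intro γ
    have hg : MemLp (fun y => ∑ j, γ j * h j y) 2 (volume : Measure (Fin d → ℝ)) :=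
      memLp_finset_sum _ (fun j _ => (hL2 j).const_mul (γ j))
    have hsub : MemLp (fun y => (∑ j, γ j * h j y) - hh y) 2
        (volume : Measure (Fin d → ℝ)) := hg.sub hhL2
    have i1 : Integrable (fun y => ((∑ j, γ j * h j y) - hh y) ^ 2)
        (volume : Measure (Fin d → ℝ)) := hsub.integrable_sq
    have i2 : Integrable (fun y => (hh y) ^ 2) (volume : Measure (Fin d → ℝ)) :=
      hhL2.integrable_sq
    have i3 : Integrable (fun y => (∑ j, γ j * h j y) * hh y)
        (volume : Measure (Fin d → ℝ)) := l2_mul_integrable hg hhL2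
    have step1 : (∫ y, (∑ j, γ j * h j y) ^ 2)
        = ∫ y, (((∑ j, γ j * h j y) - hh y) ^ 2 - (hh y) ^ 2
            + 2 * ((∑ j, γ j * h j y) * hh y)) := by
      congr 1; funext y; ring
    have step2 : (∫ y, (((∑ j, γ j * h j y) - hh y) ^ 2 - (hh y) ^ 2
            + 2 * ((∑ j, γ j * h j y) * hh y)))
        = (∫ y, ((∑ j, γ j * h j y) - hh y) ^ 2) - (∫ y, (hh y) ^ 2)
          + 2 * ∫ y, (∑ j, γ j * h j y) * hh y := by
      have i12 : Integrable (fun y => ((∑ j, γ j * h j y) - hh y) ^ 2 - (hh y) ^ 2)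
          (volume : Measure (Fin d → ℝ)) := i1.sub i2
      rw [integral_add i12 (i3.const_mul 2), integral_sub i1 i2, integral_const_mul]
    have step3 : (∫ y, (∑ j, γ j * h j y) * hh y) = ∑ j, γ j * T j := by
      have e : ∀ y, (∑ j, γ j * h j y) * hh y = ∑ j, γ j * (h j y * hh y) := by
        intro y; rw [Finset.sum_mul]; exact Finset.sum_congr rfl fun j _ => by ring
      simp_rw [e]
      rw [integral_finset_sum _ (fun j _ =>
        ((l2_mul_integrable (hL2 j) hhL2).const_mul (γ j)))]
      exact Finset.sum_congr rfl fun j _ => integral_const_mul _ _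
    rw [step1, step2, step3]
  -- empirical sums
  have emp : ∀ j, (∑ i, h j (X i ω)) = (n : ℝ) * M j ω + (n : ℝ) * T j := by
    intro j
    have hMj : M j ω = (1 / (n : ℝ)) * ((∑ i, h j (X i ω)) - (n : ℝ) * T j) := by
      rw [hM]
      congr 1
      rw [Finset.sum_sub_distrib]
      congr 1
      rw [Finset.sum_congr rfl fun i _ => hE j i, Finset.sum_const, Finset.card_univ]
      simp [hT, nsmul_eq_mul]
    field_simp at hMj
    linarith [hMj]
  -- the objective in convenient form
  have Fform : ∀ γ : Fin W → ℝ, F ω γ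
      = (∫ y, (∑ j, γ j * h j y - hh y) ^ 2) - (∫ y, (hh y) ^ 2)
        - 2 * (∑ j, γ j * M j ω) + 2 * (∑ j, ωw j * |γ j|) + c * (∑ j, (γ j) ^ 2) := by
    intro γ
    rw [hF, claim1 γ]
    have e1 : (∑ i, ∑ j, γ j * h j (X i ω))
        = (n : ℝ) * (∑ j, γ j * M j ω) + (n : ℝ) * (∑ j, γ j * T j) := by
      rw [Finset.sum_comm]
      have : ∀ j, (∑ i, γ j * h j (X i ω)) = (n:ℝ) * (γ j * M j ω) + (n:ℝ) * (γ j * T j) := by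
        intro j
        rw [← Finset.mul_sum, emp j]; ring
      rw [Finset.sum_congr rfl fun j _ => this j, Finset.sum_add_distrib,
        ← Finset.mul_sum, ← Finset.mul_sum]
    rw [e1]
    field_simp
    ring
  -- the basic inequality from minimality
  have star := hmin ω β
  rw [Fform (bhat ω), Fform β] at star
  -- per-coordinate inequality
  have perj : ∀ j ∈ Finset.univ,
      omt j * |bhat ω j - β j| + c * ((bhat ω j - β j) ^ 2)
        + 2 * ((bhat ω j - β j) * M j ω) + 2 * (ωw j * (|β j| - |bhat ω j|))
        + c * ((β j) ^ 2 - (bhat ω j) ^ 2)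
      ≤ (if β j ≠ 0 then 6 * (ωw j * |bhat ω j - β j|) else 0) := by
    intro j _
    have hw : ωw j = omt j + c * B := hωw j
    have ho : 0 ≤ omt j := homt0 j
    have hcb : c * B ≤ omt j := hcBle j
    have hm : 2 * |M j ω| ≤ omt j := hev j
    have haB : |β j| ≤ B := hβB j
    have h6 : (0:ℝ) ≤ |bhat ω j - β j| := abs_nonneg _
    have h1 : (bhat ω j - β j) * M j ω ≤ |bhat ω j - β j| * |M j ω| :=
      (le_abs_self _).trans (abs_mul _ _).le
    have h2 : |bhat ω j - β j| * (2 * |M j ω|) ≤ |bhat ω j - β j| * omt j :=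
      mul_le_mul_of_nonneg_left hm h6
    have hcB0 : 0 ≤ c * B := mul_nonneg hc0 hB.le
    have hw0 : 0 ≤ ωw j := by rw [hw]; linarith
    by_cases ha : β j = 0
    · simp only [ha, if_neg (not_not.mpr rfl), sub_zero, abs_zero]
      have hb1 : bhat ω j * M j ω ≤ |bhat ω j| * |M j ω| :=
        (le_abs_self _).trans (abs_mul _ _).le
      have hb2 : |bhat ω j| * (2 * |M j ω|) ≤ |bhat ω j| * omt j :=
        mul_le_mul_of_nonneg_left hm (abs_nonneg _)
      rw [hw]
      nlinarith [mul_nonneg hcB0 (abs_nonneg (bhat ω j)), hb1, hb2]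
    · simp only [if_pos ha]
      have h3 : |β j| - |bhat ω j| ≤ |bhat ω j - β j| := by
        rw [abs_sub_comm]; exact abs_sub_abs_le_abs_sub _ _
      have wh3 : ωw j * (|β j| - |bhat ω j|) ≤ ωw j * |bhat ω j - β j| :=
        mul_le_mul_of_nonneg_left h3 hw0
      have h4 : -(β j * (bhat ω j - β j)) ≤ |β j| * |bhat ω j - β j| :=
        (neg_le_abs _).trans (abs_mul _ _).le
      have h5 : |β j| * |bhat ω j - β j| ≤ B * |bhat ω j - β j| :=
        mul_le_mul_of_nonneg_right haB h6
      have hc4 : c * (-(β j * (bhat ω j - β j))) ≤ c * (B * |bhat ω j - β j|) :=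
        mul_le_mul_of_nonneg_left (h4.trans h5) hc0
      nlinarith [mul_nonneg hw0 h6, h1, h2, hc4, wh3]
  have key2 := Finset.sum_le_sum perj
  -- rewrite both sides of key2 into atoms
  have lhs_eq : ∑ j, (omt j * |bhat ω j - β j| + c * ((bhat ω j - β j) ^ 2)
        + 2 * ((bhat ω j - β j) * M j ω) + 2 * (ωw j * (|β j| - |bhat ω j|))
        + c * ((β j) ^ 2 - (bhat ω j) ^ 2))
      = (∑ j, omt j * |bhat ω j - β j|) + c * (∑ j, (bhat ω j - β j) ^ 2)
        + 2 * ((∑ j, bhat ω j * M j ω) - ∑ j, β j * M j ω)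
        + 2 * ((∑ j, ωw j * |β j|) - ∑ j, ωw j * |bhat ω j|)
        + c * ((∑ j, (β j) ^ 2) - ∑ j, (bhat ω j) ^ 2) := by
    simp only [Finset.sum_add_distrib, ← Finset.mul_sum, sub_mul, mul_sub,
      Finset.sum_sub_distrib]
  have rhs_eq : ∑ j, (if β j ≠ 0 then 6 * (ωw j * |bhat ω j - β j|) else 0)
      = 6 * ∑ j ∈ Finset.filter (fun j => β j ≠ 0) Finset.univ,
          ωw j * |bhat ω j - β j| := by
    rw [Finset.mul_sum, Finset.sum_filter]
  rw [lhs_eq, rhs_eq] at key2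
  linarith [star, key2]
end

section
/- Let X_1,…,X_n be i.i.d. ℝ^d-valued random variables with common density h := h_{β*} ∈ L²(ℝ^d), where β* ∈ ℝ^W has β*_j ≥ 0, Σ_{j=1}^W β*_j = 1 and 0 < max_j|β*_j| ≤ B, and h_1,…,h_W ∈ L²(ℝ^d) are probability densities with ‖h_j‖ = 1 and 0 ≤ h_j ≤ L_j, L_min := min_j L_j > 0. Suppose the Gram matrix ψ_W := (⟨h_i,h_j⟩)_{1≤i,j≤W} is positive definite with smallest eigenvalue at least λ_W > 0. Let 0 < δ < 1, v := √(log(2W²/δ)/n), ω̃_j := 2√2·L_j·v, c := (min_j ω̃_j)/B, ω_j := ω̃_j + cB, and let β̂ be a measurable minimizer over ℝ^W of the CSDE objective F(β) = −(2/n)Σ_{i=1}^n h_β(X_i) + ‖h_β‖² + 2Σ_{j=1}^W ω_j|β_j| + cΣ_{j=1}^W β_j². Then, with probability at least 1 − δ/W, Σ_{j=1}^W |β̂_j − β*_j| ≤ 288√2·v·G*/(L_min·λ_W), where G* := Σ_{j∈I(β*)} L_j². -/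
open MeasureTheory Finset ProbabilityTheory

lemma csde_det_bound {W : ℕ}
    (L bs bh omt ωw S m : Fin W → ℝ) (ψ : Fin W → Fin W → ℝ)
    (Lmin v lW c B Gs : ℝ)
    (hLminpos : 0 < Lmin) (hLminle : ∀ j, Lmin ≤ L j)
    (hv : 0 < v) (hlW : 0 < lW) (hc : 0 ≤ c) (hcBpos : 0 ≤ c * B)
    (hbsB : ∀ j, |bs j| ≤ B)
    (homt : ∀ j, omt j = 2 * Real.sqrt 2 * L j * v)
    (hωw : ∀ j, ωw j = omt j + c * B)
    (hcB : ∀ j, c * B ≤ omt j)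
    (hψsymm : ∀ i j, ψ i j = ψ j i)
    (hgram : ∀ u : Fin W → ℝ, lW * (∑ j, (u j) ^ 2) ≤ ∑ i, ∑ j, u i * ψ i j * u j)
    (hm : ∀ j, m j = ∑ k, bs k * ψ j k)
    (hS : ∀ j, |S j - m j| ≤ Real.sqrt 2 * L j * v)
    (hGs : Gs = ∑ j ∈ Finset.filter (fun j => bs j ≠ 0) Finset.univ, (L j) ^ 2)
    (hQ : -2 * (∑ j, bh j * S j) + (∑ i, ∑ j, bh i * ψ i j * bh j)
            + 2 * (∑ j, ωw j * |bh j|) + c * (∑ j, (bh j) ^ 2)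
        ≤ -2 * (∑ j, bs j * S j) + (∑ i, ∑ j, bs i * ψ i j * bs j)
            + 2 * (∑ j, ωw j * |bs j|) + c * (∑ j, (bs j) ^ 2)) :
    (∑ j, |bh j - bs j|) ≤ 288 * Real.sqrt 2 * v * Gs / (Lmin * lW) := by
  classical
  set Δ : Fin W → ℝ := fun j => bh j - bs j with hΔ
  set D : ℝ := ∑ i, ∑ j, Δ i * ψ i j * Δ j with hD
  have hsqrt2 : (0:ℝ) < Real.sqrt 2 := by positivity
  have hLpos : ∀ j, (0:ℝ) < L j := fun j => lt_of_lt_of_le hLminpos (hLminle j)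
  have homtpos : ∀ j, (0:ℝ) ≤ omt j := fun j => by
    rw [homt j]; have := (hLpos j).le; positivity
  have habs : ∀ j, (0:ℝ) ≤ |Δ j| := fun j => abs_nonneg _
  have hbh : ∀ j, bh j = Δ j + bs j := fun j => by simp only [hΔ]; ring
  -- quadratic expansion
  have e1 : ∀ i, (∑ j, ψ i j * bs j) = m i := by
    intro i
    rw [hm i]
    exact Finset.sum_congr rfl fun k _ => by ring
  have e2 : ∀ j, (∑ i, bs i * ψ i j) = m j := by
    intro j
    rw [hm j]
    exact Finset.sum_congr rfl fun k _ => by rw [hψsymm j k]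
  have hquad : (∑ i, ∑ j, bh i * ψ i j * bh j)
      = D + 2 * (∑ j, Δ j * m j) + ∑ i, ∑ j, bs i * ψ i j * bs j := by
    have C0 : ∀ i j, bh i * ψ i j * bh j
        = Δ i * (ψ i j * bs j) + (bs i * ψ i j * Δ j
          + (Δ i * ψ i j * Δ j + bs i * ψ i j * bs j)) := by
      intro i j; simp only [hΔ]; ring
    simp only [C0, Finset.sum_add_distrib]
    have C1 : (∑ i, ∑ j, Δ i * (ψ i j * bs j)) = ∑ j, Δ j * m j := by
      refine Finset.sum_congr rfl fun i _ => ?_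
      rw [← Finset.mul_sum, e1]
    have C2 : (∑ i, ∑ j, bs i * ψ i j * Δ j) = ∑ j, Δ j * m j := by
      rw [Finset.sum_comm]
      refine Finset.sum_congr rfl fun j _ => ?_
      rw [← Finset.sum_mul, e2 j, mul_comm]
    rw [C1, C2, ← hD]
    ring
  -- basic inequality
  have hsub1 : (∑ j, bh j * S j) - (∑ j, bs j * S j) = ∑ j, Δ j * S j := by
    rw [← Finset.sum_sub_distrib]
    exact Finset.sum_congr rfl fun j _ => by simp only [hΔ]; ring
  have hsub4 : (∑ j, Δ j * S j) - (∑ j, Δ j * m j) = ∑ j, Δ j * (S j - m j) := by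
    rw [← Finset.sum_sub_distrib]
    exact Finset.sum_congr rfl fun j _ => by ring
  have hDle : D ≤ 2 * (∑ j, Δ j * (S j - m j))
      + 2 * (∑ j, ωw j * (|bs j| - |bh j|))
      + c * (∑ j, ((bs j) ^ 2 - (bh j) ^ 2)) := by
    have hsub2 : (∑ j, ωw j * (|bs j| - |bh j|))
        = (∑ j, ωw j * |bs j|) - ∑ j, ωw j * |bh j| := by
      rw [← Finset.sum_sub_distrib]
      exact Finset.sum_congr rfl fun j _ => by ring
    have hsub3 : (∑ j, ((bs j) ^ 2 - (bh j) ^ 2))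
        = (∑ j, (bs j) ^ 2) - ∑ j, (bh j) ^ 2 := Finset.sum_sub_distrib _ _
    rw [hsub2, hsub3, ← hsub4, ← hsub1]
    linarith only [hQ, hquad]
  -- termwise bounds
  have b1 : ∀ j, 2 * (Δ j * (S j - m j)) ≤ omt j * |Δ j| := by
    intro j
    have h1 : Δ j * (S j - m j) ≤ |Δ j| * |S j - m j| := by
      calc Δ j * (S j - m j) ≤ |Δ j * (S j - m j)| := le_abs_self _
        _ = |Δ j| * |S j - m j| := abs_mul _ _
    have h2 : |Δ j| * |S j - m j| ≤ |Δ j| * (Real.sqrt 2 * L j * v) :=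
      mul_le_mul_of_nonneg_left (hS j) (habs j)
    rw [homt j]; linarith only [h1, h2]
  have b2 : ∀ j, c * ((bs j) ^ 2 - (bh j) ^ 2) ≤ 2 * (c * B) * |Δ j| := by
    intro j
    have h0 : (bs j) ^ 2 - (bh j) ^ 2 ≤ 2 * |bs j| * |Δ j| := by
      have k1 : -(|bs j| * |Δ j|) ≤ bs j * Δ j := by
        rw [← abs_mul]; exact neg_abs_le _
      have k2 : (bs j) ^ 2 - (bh j) ^ 2 = -((Δ j) ^ 2) - 2 * (bs j * Δ j) := by
        rw [hbh j]; ring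
      have k3 := sq_nonneg (Δ j)
      linarith only [k1, k2, k3]
    calc c * ((bs j) ^ 2 - (bh j) ^ 2) ≤ c * (2 * |bs j| * |Δ j|) :=
          mul_le_mul_of_nonneg_left h0 hc
      _ ≤ 2 * (c * B) * |Δ j| := by
          have k := mul_nonneg (mul_nonneg hc (sub_nonneg.2 (hbsB j))) (habs j)
          linarith only [k]
  have hD2 : D ≤ (∑ j, ((omt j + 2 * (c * B)) * |Δ j| + 2 * (ωw j * (|bs j| - |bh j|)))) := by
    have hc1 : 2 * (∑ j, Δ j * (S j - m j)) + c * (∑ j, ((bs j) ^ 2 - (bh j) ^ 2))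
        ≤ ∑ j, (omt j + 2 * (c * B)) * |Δ j| := by
      rw [Finset.mul_sum, Finset.mul_sum, ← Finset.sum_add_distrib]
      refine Finset.sum_le_sum fun j _ => ?_
      have e : (omt j + 2 * (c * B)) * |Δ j| = omt j * |Δ j| + 2 * (c * B) * |Δ j| := by ring
      rw [e]
      exact add_le_add (b1 j) (b2 j)
    have hc2 : 2 * (∑ j, ωw j * (|bs j| - |bh j|))
        = ∑ j, 2 * (ωw j * (|bs j| - |bh j|)) := Finset.mul_sum _ _ _
    rw [Finset.sum_add_distrib, ← hc2]
    linarith [hDle, hc1]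
  -- split over support
  set I : Finset (Fin W) := Finset.filter (fun j => bs j ≠ 0) Finset.univ with hI
  set T : ℝ := ∑ j ∈ I, L j * |Δ j| with hT
  have hTnonneg : 0 ≤ T := Finset.sum_nonneg fun j _ =>
    mul_nonneg (hLpos j).le (habs j)
  have hstep : D + (∑ j ∈ Finset.filter (fun j => ¬ bs j ≠ 0) Finset.univ, omt j * |Δ j|)
      ≤ 14 * Real.sqrt 2 * v * T := by
    have hsplit := Finset.sum_filter_add_sum_filter_not Finset.univ (fun j => bs j ≠ 0)
      (fun j => (omt j + 2 * (c * B)) * |Δ j| + 2 * (ωw j * (|bs j| - |bh j|)))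
    have hIc : (∑ j ∈ Finset.filter (fun j => ¬ bs j ≠ 0) Finset.univ,
        ((omt j + 2 * (c * B)) * |Δ j| + 2 * (ωw j * (|bs j| - |bh j|))))
        = ∑ j ∈ Finset.filter (fun j => ¬ bs j ≠ 0) Finset.univ, -(omt j * |Δ j|) := by
      refine Finset.sum_congr rfl fun j hj => ?_
      have hbs0 : bs j = 0 := by simpa using (Finset.mem_filter.1 hj).2
      have hbhΔ : |bh j| = |Δ j| := by rw [hbh j, hbs0]; simp
      rw [hωw j, hbs0, hbhΔ]; simp; ring
    have hIb : (∑ j ∈ I, ((omt j + 2 * (c * B)) * |Δ j| + 2 * (ωw j * (|bs j| - |bh j|))))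
        ≤ ∑ j ∈ I, 14 * Real.sqrt 2 * v * (L j * |Δ j|) := by
      refine Finset.sum_le_sum fun j _ => ?_
      have htri : |bs j| - |bh j| ≤ |Δ j| := by
        calc |bs j| - |bh j| ≤ |bs j - bh j| := abs_sub_abs_le_abs_sub _ _
          _ = |Δ j| := by rw [show bs j - bh j = -(Δ j) by simp only [hΔ]; ring, abs_neg]
      have h2 : 2 * (ωw j * (|bs j| - |bh j|)) ≤ 2 * (ωw j * |Δ j|) := by
        have hωwpos : 0 ≤ ωw j := by rw [hωw j]; linarith [homtpos j, hcBpos]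
        have k := mul_le_mul_of_nonneg_left htri hωwpos
        linarith only [k]
      have h3 : (omt j + 2 * (c * B)) * |Δ j| + 2 * (ωw j * |Δ j|)
          ≤ 7 * omt j * |Δ j| := by
        have hmul := mul_le_mul_of_nonneg_right (hcB j) (habs j)
        rw [hωw j]
        linarith only [hmul]
      have h4 : 7 * omt j * |Δ j| = 14 * Real.sqrt 2 * v * (L j * |Δ j|) := by
        rw [homt j]; ring
      linarith only [h2, h3, h4]
    have e14 : (∑ j ∈ I, 14 * Real.sqrt 2 * v * (L j * |Δ j|))
        = 14 * Real.sqrt 2 * v * T := by rw [hT, Finset.mul_sum]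
    rw [e14] at hIb
    rw [← hsplit, hIc] at hD2
    have hneg : (∑ j ∈ Finset.filter (fun j => ¬ bs j ≠ 0) Finset.univ, -(omt j * |Δ j|))
        = -(∑ j ∈ Finset.filter (fun j => ¬ bs j ≠ 0) Finset.univ, omt j * |Δ j|) :=
      Finset.sum_neg_distrib _
    rw [hneg] at hD2
    rw [hI] at hIb
    linarith only [hD2, hIb]
  -- nonnegativity of D
  have hDge : lW * (∑ j, (Δ j) ^ 2) ≤ D := by rw [hD]; exact hgram Δ
  have hN2 : (0:ℝ) ≤ ∑ j, (Δ j) ^ 2 := Finset.sum_nonneg fun j _ => sq_nonneg _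
  have hD0 : (0:ℝ) ≤ D := le_trans (by positivity) hDge
  have homtsum : (0:ℝ) ≤ ∑ j ∈ Finset.filter (fun j => ¬ bs j ≠ 0) Finset.univ,
      omt j * |Δ j| := Finset.sum_nonneg fun j _ => mul_nonneg (homtpos j) (habs j)
  have hD14 : D ≤ 14 * Real.sqrt 2 * v * T := by linarith only [hstep, homtsum]
  -- ℓ₁ on complement of support
  have hIc1 : (∑ j ∈ Finset.filter (fun j => ¬ bs j ≠ 0) Finset.univ, omt j * |Δ j|)
      ≤ 14 * Real.sqrt 2 * v * T := by linarith only [hstep, hD0]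
  have hIc2 : 2 * Real.sqrt 2 * Lmin * v *
      (∑ j ∈ Finset.filter (fun j => ¬ bs j ≠ 0) Finset.univ, |Δ j|)
      ≤ ∑ j ∈ Finset.filter (fun j => ¬ bs j ≠ 0) Finset.univ, omt j * |Δ j| := by
    rw [Finset.mul_sum]
    refine Finset.sum_le_sum fun j _ => ?_
    have k := mul_le_mul_of_nonneg_left (mul_le_mul_of_nonneg_right (hLminle j) (habs j))
      (by positivity : (0:ℝ) ≤ 2 * Real.sqrt 2 * v)
    rw [homt j]
    linarith only [k]
  have hIcfin : Lmin * (∑ j ∈ Finset.filter (fun j => ¬ bs j ≠ 0) Finset.univ, |Δ j|)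
      ≤ 7 * T := by
    have hfac : (0:ℝ) < 2 * Real.sqrt 2 * v := by positivity
    refine le_of_mul_le_mul_left ?_ hfac
    calc (2 * Real.sqrt 2 * v) * (Lmin *
          (∑ j ∈ Finset.filter (fun j => ¬ bs j ≠ 0) Finset.univ, |Δ j|))
        = 2 * Real.sqrt 2 * Lmin * v *
          (∑ j ∈ Finset.filter (fun j => ¬ bs j ≠ 0) Finset.univ, |Δ j|) := by ring
      _ ≤ ∑ j ∈ Finset.filter (fun j => ¬ bs j ≠ 0) Finset.univ, omt j * |Δ j| := hIc2
      _ ≤ 14 * Real.sqrt 2 * v * T := hIc1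
      _ = (2 * Real.sqrt 2 * v) * (7 * T) := by ring
  have hIfin : Lmin * (∑ j ∈ I, |Δ j|) ≤ T := by
    rw [hT, Finset.mul_sum]
    exact Finset.sum_le_sum fun j _ => mul_le_mul_of_nonneg_right (hLminle j) (habs j)
  have htot : (∑ j, |Δ j|) = (∑ j ∈ I, |Δ j|)
      + ∑ j ∈ Finset.filter (fun j => ¬ bs j ≠ 0) Finset.univ, |Δ j| := by
    rw [hI]
    exact (Finset.sum_filter_add_sum_filter_not Finset.univ _ _).symm
  have h8 : Lmin * (∑ j, |Δ j|) ≤ 8 * T := by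
    rw [htot, mul_add]; linarith only [hIfin, hIcfin]
  -- Cauchy–Schwarz
  have hGs0 : (0:ℝ) ≤ Gs := by
    rw [hGs]; exact Finset.sum_nonneg fun j _ => sq_nonneg _
  have hCS : T ^ 2 ≤ Gs * (∑ j, (Δ j) ^ 2) := by
    have h1 := Finset.sum_mul_sq_le_sq_mul_sq I L (fun j => |Δ j|)
    have h2 : (∑ j ∈ I, |Δ j| ^ 2) ≤ ∑ j, (Δ j) ^ 2 := by
      rw [hI]
      refine le_trans (le_of_eq (Finset.sum_congr rfl fun j _ => sq_abs _)) ?_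
      exact Finset.sum_le_sum_of_subset_of_nonneg (Finset.filter_subset _ _)
        fun j _ _ => sq_nonneg _
    have h3 : (∑ j ∈ I, (L j) ^ 2) = Gs := by rw [hGs, hI]
    calc T ^ 2 ≤ (∑ j ∈ I, (L j) ^ 2) * (∑ j ∈ I, |Δ j| ^ 2) := by
          rw [hT]; exact h1
      _ ≤ Gs * (∑ j, (Δ j) ^ 2) := by
          rw [h3]
          exact mul_le_mul_of_nonneg_left h2 hGs0
  -- conclude
  have hRHS0 : (0:ℝ) ≤ 288 * Real.sqrt 2 * v * Gs / (Lmin * lW) := by positivity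
  rcases eq_or_lt_of_le hTnonneg with hT0 | hTpos
  · have hle0 : Lmin * (∑ j, |Δ j|) ≤ Lmin * 0 := by
      rw [mul_zero]
      calc Lmin * (∑ j, |Δ j|) ≤ 8 * T := h8
        _ = 0 := by rw [← hT0]; ring
    exact le_trans (le_of_mul_le_mul_left hle0 hLminpos) hRHS0
  · have hTfin : lW * T ≤ 14 * Real.sqrt 2 * v * Gs := by
      refine le_of_mul_le_mul_left ?_ hTpos
      calc T * (lW * T) = lW * (T ^ 2) := by ring
        _ ≤ lW * (Gs * (∑ j, (Δ j) ^ 2)) := mul_le_mul_of_nonneg_left hCS hlW.le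
        _ = Gs * (lW * (∑ j, (Δ j) ^ 2)) := by ring
        _ ≤ Gs * (14 * Real.sqrt 2 * v * T) :=
            mul_le_mul_of_nonneg_left (hDge.trans hD14) hGs0
        _ = T * (14 * Real.sqrt 2 * v * Gs) := by ring
    rw [le_div_iff₀ (show (0:ℝ) < Lmin * lW by positivity)]
    calc (∑ j, |Δ j|) * (Lmin * lW) = lW * (Lmin * (∑ j, |Δ j|)) := by ring
      _ ≤ lW * (8 * T) := mul_le_mul_of_nonneg_left h8 hlW.le
      _ = 8 * (lW * T) := by ring
      _ ≤ 8 * (14 * Real.sqrt 2 * v * Gs) :=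
          mul_le_mul_of_nonneg_left hTfin (by norm_num)
      _ ≤ 288 * Real.sqrt 2 * v * Gs := by
          have k := mul_nonneg (mul_nonneg hsqrt2.le hv.le) hGs0
          linarith only [k]
open scoped ENNReal NNReal in
lemma csde_chernoff {Ω : Type*} [MeasurableSpace Ω] (μ : Measure Ω) [IsProbabilityMeasure μ]
    {n : ℕ} (Y : Fin n → Ω → ℝ) (L : ℝ) (hL : 0 < L)
    (hmeas : ∀ i, Measurable (Y i))
    (hindep : iIndepFun Y μ)
    (hbdd : ∀ i ω, |Y i ω| ≤ L)
    (hmean : ∀ i, ∫ ω, Y i ω ∂μ = 0)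
    (v : ℝ) (hv : 0 ≤ v) :
    μ {ω | (n:ℝ) * (Real.sqrt 2 * L * v) ≤ ∑ i, Y i ω}
      ≤ ENNReal.ofReal (Real.exp (-((n:ℝ) * v ^ 2))) := by
  classical
  set s : ℝ := Real.sqrt 2 * v / L with hs_def
  have hs : 0 ≤ s := by rw [hs_def]; positivity
  clear_value s
  have hYint : ∀ i, Integrable (Y i) μ := fun i =>
    ⟨(hmeas i).aestronglyMeasurable,
      HasFiniteIntegral.of_bounded (C := L) (Filter.Eventually.of_forall fun ω => by
        simpa using hbdd i ω)⟩
  have hexpint : ∀ i, Integrable (fun ω => Real.exp (s * Y i ω)) μ := fun i =>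
    ⟨(((hmeas i).const_mul s).exp).aestronglyMeasurable,
      HasFiniteIntegral.of_bounded (C := Real.exp (s * L))
        (Filter.Eventually.of_forall fun ω => by
          rw [Real.norm_eq_abs, abs_of_pos (Real.exp_pos _), Real.exp_le_exp]
          exact mul_le_mul_of_nonneg_left ((le_abs_self _).trans (hbdd i ω)) hs)⟩
  -- mgf bound for each variable
  have hmgf : ∀ i, mgf (Y i) μ s ≤ Real.exp (s ^ 2 * L ^ 2 / 2) := by
    intro i
    set A : ℝ := Real.exp (-(s * L)) with hA
    set B : ℝ := Real.exp (s * L) with hB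
    clear_value A B
    have hchord : ∀ ω, Real.exp (s * Y i ω)
        ≤ (A + B) / 2 + Y i ω * ((B - A) / (2 * L)) := by
      intro ω
      set z := Y i ω with hz
      have hz1 : -L ≤ z := by rw [hz]; exact neg_le_of_abs_le (hbdd i ω)
      have hz2 : z ≤ L := by rw [hz]; exact le_of_abs_le (hbdd i ω)
      clear_value z
      have h2L : (2 * L : ℝ) ≠ 0 := ne_of_gt (by positivity)
      have ha : (0:ℝ) ≤ (L - z) / (2 * L) := by
        have : (0:ℝ) ≤ L - z := by linarith
        positivity
      have hb : (0:ℝ) ≤ (L + z) / (2 * L) := by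
        have : (0:ℝ) ≤ L + z := by linarith
        positivity
      have hab : (L - z) / (2 * L) + (L + z) / (2 * L) = 1 := by
        field_simp
        ring
      have hcvx := convexOn_exp.2 (Set.mem_univ (-(s * L))) (Set.mem_univ (s * L))
        ha hb hab
      simp only [smul_eq_mul] at hcvx
      have harg : (L - z) / (2 * L) * (-(s * L)) + (L + z) / (2 * L) * (s * L)
          = s * z := by
        rw [div_mul_eq_mul_div, div_mul_eq_mul_div, ← add_div,
          div_eq_iff h2L]
        ring
      rw [harg, ← hA, ← hB] at hcvx
      calc Real.exp (s * z) ≤ (L - z) / (2 * L) * A + (L + z) / (2 * L) * B := hcvx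
        _ = (A + B) / 2 + z * ((B - A) / (2 * L)) := by
            have hL' : (L:ℝ) ≠ 0 := hL.ne'
            field_simp
            ring
    have hrhsint : Integrable (fun ω => (A + B) / 2 + Y i ω * ((B - A) / (2 * L))) μ :=
      (integrable_const _).add ((hYint i).mul_const _)
    have hint_le : mgf (Y i) μ s ≤ (A + B) / 2 := by
      have h1 : mgf (Y i) μ s = ∫ ω, Real.exp (s * Y i ω) ∂μ := rfl
      rw [h1]
      calc ∫ ω, Real.exp (s * Y i ω) ∂μ
          ≤ ∫ ω, ((A + B) / 2 + Y i ω * ((B - A) / (2 * L))) ∂μ :=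
            integral_mono (hexpint i) hrhsint hchord
        _ = (A + B) / 2 + (∫ ω, Y i ω ∂μ) * ((B - A) / (2 * L)) := by
            rw [integral_add (integrable_const _) ((hYint i).mul_const _),
              integral_const, integral_mul_const]
            simp
        _ = (A + B) / 2 := by rw [hmean i]; ring
    calc mgf (Y i) μ s ≤ (A + B) / 2 := hint_le
      _ = Real.cosh (s * L) := by rw [Real.cosh_eq, hA, hB]; ring
      _ ≤ Real.exp ((s * L) ^ 2 / 2) := Real.cosh_le_exp_half_sq _
      _ = Real.exp (s ^ 2 * L ^ 2 / 2) := by rw [mul_pow]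
  -- Chernoff
  have hmeassum : Measurable fun ω => ∑ i, Y i ω :=
    Finset.measurable_sum Finset.univ fun i _ => hmeas i
  have hsumeq : (fun ω => ∑ i, Y i ω) = ∑ i, Y i := by
    funext ω; rw [Finset.sum_apply]
  have hsumint : Integrable (fun ω => Real.exp (s * ∑ i, Y i ω)) μ := by
    refine ⟨(Real.measurable_exp.comp (hmeassum.const_mul s)).aestronglyMeasurable, ?_⟩
    refine HasFiniteIntegral.of_bounded (C := Real.exp (s * ((n:ℝ) * L)))
      (Filter.Eventually.of_forall fun ω => ?_)
    rw [Real.norm_eq_abs, abs_of_pos (Real.exp_pos _), Real.exp_le_exp]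
    refine mul_le_mul_of_nonneg_left ?_ hs
    calc (∑ i, Y i ω) ≤ ∑ i : Fin n, L :=
          Finset.sum_le_sum fun i _ => le_of_abs_le (hbdd i ω)
      _ = (n:ℝ) * L := by rw [Finset.sum_const, Finset.card_univ, Fintype.card_fin,
            nsmul_eq_mul]
  have hcher := measure_ge_le_exp_mul_mgf (μ := μ) (X := fun ω => ∑ i, Y i ω)
    ((n:ℝ) * (Real.sqrt 2 * L * v)) hs hsumint
  have hmgfsum : mgf (fun ω => ∑ i, Y i ω) μ s = ∏ i, mgf (Y i) μ s := by
    rw [hsumeq]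
    exact hindep.mgf_sum hmeas Finset.univ
  have hprod : (∏ i : Fin n, mgf (Y i) μ s) ≤ Real.exp ((n:ℝ) * (s ^ 2 * L ^ 2 / 2)) := by
    calc (∏ i : Fin n, mgf (Y i) μ s) ≤ ∏ i : Fin n, Real.exp (s ^ 2 * L ^ 2 / 2) :=
          Finset.prod_le_prod (fun i _ => mgf_nonneg) (fun i _ => hmgf i)
      _ = Real.exp ((n:ℝ) * (s ^ 2 * L ^ 2 / 2)) := by
          rw [Finset.prod_const, Finset.card_univ, Fintype.card_fin, ← Real.exp_nat_mul]
  have hfinal : (μ {ω | (n:ℝ) * (Real.sqrt 2 * L * v) ≤ ∑ i, Y i ω}).toReal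
      ≤ Real.exp (-((n:ℝ) * v ^ 2)) := by
    calc (μ {ω | (n:ℝ) * (Real.sqrt 2 * L * v) ≤ ∑ i, Y i ω}).toReal
        ≤ Real.exp (-s * ((n:ℝ) * (Real.sqrt 2 * L * v))) * mgf (fun ω => ∑ i, Y i ω) μ s := hcher
      _ ≤ Real.exp (-s * ((n:ℝ) * (Real.sqrt 2 * L * v)))
            * Real.exp ((n:ℝ) * (s ^ 2 * L ^ 2 / 2)) := by
          refine mul_le_mul_of_nonneg_left ?_ (Real.exp_pos _).le
          rw [hmgfsum]
          exact hprod
      _ = Real.exp (-s * ((n:ℝ) * (Real.sqrt 2 * L * v)) + (n:ℝ) * (s ^ 2 * L ^ 2 / 2)) := by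
          rw [← Real.exp_add]
      _ = Real.exp (-((n:ℝ) * v ^ 2)) := by
          congr 1
          have hL' : L ≠ 0 := ne_of_gt hL
          have h2 : Real.sqrt 2 * Real.sqrt 2 = 2 := Real.mul_self_sqrt (by norm_num)
          rw [hs_def]
          field_simp
          linear_combination (-((n:ℝ) * v ^ 2)) * h2
  have hne : μ {ω | (n:ℝ) * (Real.sqrt 2 * L * v) ≤ ∑ i, Y i ω} ≠ ⊤ := measure_ne_top _ _
  rw [← ENNReal.ofReal_toReal hne]
  exact ENNReal.ofReal_le_ofReal hfinal
/-- Corollary 2: ℓ₁-estimation error bound for the CSDE under the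
minimal eigenvalue assumption, with probability at least 1 − δ/W. -/
theorem csde_l1_error_eigenvalue {d W n : ℕ} (hn : 0 < n) (hW : 0 < W)
    {Ω : Type*} [MeasurableSpace Ω] (μ : Measure Ω) [IsProbabilityMeasure μ]
    (X : Fin n → Ω → (Fin d → ℝ)) (hXm : ∀ i, Measurable (X i))
    (hindep : iIndepFun X μ)
    (hid : ∀ i j, IdentDistrib (X i) (X j) μ μ)
    (h : Fin W → (Fin d → ℝ) → ℝ)
    (hL2 : ∀ j, MemLp (h j) 2 (volume : Measure (Fin d → ℝ)))
    (L : Fin W → ℝ)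
    (hbd : ∀ j y, 0 ≤ h j y ∧ h j y ≤ L j)
    (hdens1 : ∀ j, (∫ y, h j y) = 1)
    (hnorm1 : ∀ j, (∫ y, (h j y) ^ 2) = 1)
    (Lmin : ℝ) (hLminpos : 0 < Lmin)
    (hLmin : Lmin = Finset.univ.inf' ⟨⟨0, hW⟩, Finset.mem_univ _⟩ L)
    -- the true mixture coefficients and the common density h_{β*} of the Xᵢ
    (bs : Fin W → ℝ) (hbs0 : ∀ j, 0 ≤ bs j) (hbs1 : (∑ j, bs j) = 1)
    (B : ℝ) (hbsne : ∃ j, bs j ≠ 0) (hbsB : ∀ j, |bs j| ≤ B)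
    (hXdens : ∀ i, μ.map (X i) = (volume : Measure (Fin d → ℝ)).withDensity
      (fun y => ENNReal.ofReal (∑ j, bs j * h j y)))
    -- the Gram matrix is positive definite with least eigenvalue ≥ λW > 0
    (lW : ℝ) (hlW : 0 < lW)
    (hgram : ∀ u : Fin W → ℝ,
      lW * (∑ j, (u j) ^ 2) ≤ ∑ i, ∑ j, u i * (∫ y, h i y * h j y) * u j)
    (δ : ℝ) (hδ0 : 0 < δ) (hδ1 : δ < 1)
    (v : ℝ) (hv : v = Real.sqrt (Real.log (2 * W ^ 2 / δ) / n))
    (omt : Fin W → ℝ) (homt : ∀ j, omt j = 2 * Real.sqrt 2 * L j * v)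
    (c : ℝ) (hc : c = (Finset.univ.inf' ⟨⟨0, hW⟩, Finset.mem_univ _⟩ omt) / B)
    (ωw : Fin W → ℝ) (hωw : ∀ j, ωw j = omt j + c * B)
    (F : Ω → (Fin W → ℝ) → ℝ)
    (hF : ∀ ω (β : Fin W → ℝ), F ω β =
        -(2 / (n : ℝ)) * (∑ i, ∑ j, β j * h j (X i ω))
        + (∫ y, (∑ j, β j * h j y) ^ 2)
        + 2 * (∑ j, ωw j * |β j|) + c * (∑ j, (β j) ^ 2))
    (bhat : Ω → Fin W → ℝ) (hbhatm : Measurable bhat)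
    (hmin : ∀ ω (β : Fin W → ℝ), F ω (bhat ω) ≤ F ω β)
    (Gs : ℝ) (hGs : Gs = ∑ j ∈ Finset.filter (fun j => bs j ≠ 0) Finset.univ, (L j) ^ 2) :
    ENNReal.ofReal (1 - δ / W) ≤
      μ {ω | (∑ j, |bhat ω j - bs j|) ≤ 288 * Real.sqrt 2 * v * Gs / (Lmin * lW)} := by
  classical
  -- basic positivity facts
  have hn' : ((n:ℝ)) ≠ 0 := Nat.cast_ne_zero.2 hn.ne'
  have hnpos : (0:ℝ) < n := Nat.cast_pos.2 hn
  have hWpos : (0:ℝ) < W := Nat.cast_pos.2 hW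
  have hB : (0:ℝ) < B := by
    obtain ⟨j0, hj0⟩ := hbsne
    exact lt_of_lt_of_le (abs_pos.2 hj0) (hbsB j0)
  have hLminle : ∀ j, Lmin ≤ L j := fun j => by
    rw [hLmin]; exact Finset.inf'_le _ (Finset.mem_univ j)
  have hLpos : ∀ j, (0:ℝ) < L j := fun j => lt_of_lt_of_le hLminpos (hLminle j)
  have hlog : 0 < Real.log (2 * W ^ 2 / δ) := by
    apply Real.log_pos
    have h2W : (2:ℝ) ≤ 2 * W ^ 2 := by nlinarith [hWpos, (Nat.one_le_cast (α := ℝ)).2 hW]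
    calc (1:ℝ) < 2 := one_lt_two
      _ ≤ 2 * W ^ 2 / 1 := by rw [div_one]; exact h2W
      _ ≤ 2 * W ^ 2 / δ := by
          apply div_le_div_of_nonneg_left (by linarith) hδ0 (le_of_lt hδ1)
  have hvpos : 0 < v := by
    rw [hv]; exact Real.sqrt_pos.2 (div_pos hlog hnpos)
  have hv2 : v ^ 2 = Real.log (2 * W ^ 2 / δ) / n := by
    rw [hv, Real.sq_sqrt (le_of_lt (div_pos hlog hnpos))]
  have hexpval : Real.exp (-((n:ℝ) * v ^ 2)) = δ / (2 * W ^ 2) := by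
    rw [hv2, mul_div_cancel₀ _ hn', Real.exp_neg,
      Real.exp_log (by positivity : (0:ℝ) < 2 * W ^ 2 / δ), inv_div]
  -- integrability of the h j and products
  have hmeas' : ∀ j, AEStronglyMeasurable (h j) (volume : Measure (Fin d → ℝ)) :=
    fun j => (hL2 j).aestronglyMeasurable
  have hInt : ∀ j, Integrable (h j) (volume : Measure (Fin d → ℝ)) := by
    intro j
    by_contra hni
    have h1 := hdens1 j
    rw [integral_undef hni] at h1
    exact one_ne_zero h1.symm
  have hIntmul : ∀ i j, Integrable (fun y => h i y * h j y)
      (volume : Measure (Fin d → ℝ)) := by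
    intro i j
    refine (hInt j).bdd_mul (c := L i) (hmeas' i) (Filter.Eventually.of_forall fun y => ?_)
    rw [Real.norm_eq_abs, abs_of_nonneg (hbd i y).1]
    exact (hbd i y).2
  -- the Gram matrix and means
  set ψ : Fin W → Fin W → ℝ := fun i j => ∫ y, h i y * h j y with hψdef
  have hψsymm : ∀ i j, ψ i j = ψ j i := by
    intro i j
    simp only [hψdef]
    exact integral_congr_ae (Filter.Eventually.of_forall fun y => mul_comm _ _)
  set m : Fin W → ℝ := fun j => ∑ k, bs k * ψ j k with hmdef
  -- measurable bounded representatives of the h j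
  have hrep : ∀ j : Fin W, ∃ g : (Fin d → ℝ) → ℝ, Measurable g ∧
      (∀ y, 0 ≤ g y ∧ g y ≤ L j) ∧ g =ᵐ[(volume : Measure (Fin d → ℝ))] h j := by
    intro j
    obtain ⟨g0, hg0m, hg0ae⟩ := hmeas' j
    refine ⟨fun y => max 0 (min (g0 y) (L j)), ?_, ?_, ?_⟩
    · exact measurable_const.max ((hg0m.measurable).min measurable_const)
    · intro y
      exact ⟨le_max_left _ _, max_le (hLpos j).le (min_le_right _ _)⟩
    · filter_upwards [hg0ae] with y hy
      rw [← hy, min_eq_left (hbd j y).2, max_eq_right (hbd j y).1]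
  choose g hgmeas hgbd hgae using hrep
  -- the pushforward measures and means
  have hac : ∀ i, μ.map (X i) ≪ (volume : Measure (Fin d → ℝ)) := by
    intro i
    rw [hXdens i]
    exact withDensity_absolutelyContinuous _ _
  have hcomp : ∀ i j, (fun ω => g j (X i ω)) =ᵐ[μ] (fun ω => h j (X i ω)) := by
    intro i j
    exact ae_eq_comp (hXm i).aemeasurable ((hac i).ae_eq (hgae j))
  have hden_nonneg : ∀ y, (0:ℝ) ≤ ∑ k, bs k * h k y := fun y =>
    Finset.sum_nonneg fun k _ => mul_nonneg (hbs0 k) (hbd k y).1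
  have hm_push : ∀ i : Fin n, ∀ j, (∫ y, h j y ∂(μ.map (X i))) = m j := by
    intro i j
    rw [hXdens i]
    have hdenae : AEMeasurable (fun y => (∑ k, bs k * h k y).toNNReal)
        (volume : Measure (Fin d → ℝ)) := by
      refine measurable_real_toNNReal.comp_aemeasurable ?_
      exact Finset.aemeasurable_fun_sum Finset.univ fun k _ =>
        ((hmeas' k).aemeasurable.const_mul _)
    have hcoe : (fun y => ENNReal.ofReal (∑ k, bs k * h k y))
        = fun y => (((∑ k, bs k * h k y).toNNReal : NNReal) : ENNReal) := rfl
    rw [hcoe, integral_withDensity_eq_integral_smul₀ hdenae]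
    have : ∀ y, (∑ k, bs k * h k y).toNNReal • h j y
        = ∑ k, bs k * (h k y * h j y) := by
      intro y
      simp only [NNReal.smul_def, smul_eq_mul]
      rw [Real.coe_toNNReal _ (hden_nonneg y), Finset.sum_mul]
      exact Finset.sum_congr rfl fun k _ => by ring
    rw [integral_congr_ae (Filter.Eventually.of_forall this),
      integral_finset_sum _ (fun k _ => ((hIntmul k j).const_mul _)),
      hmdef]
    refine Finset.sum_congr rfl fun k _ => ?_
    rw [integral_const_mul]
    exact congrArg (fun z => bs k * z) (hψsymm k j)
  have hgm : ∀ i j, (∫ ω, g j (X i ω) ∂μ) = m j := by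
    intro i j
    have h1 : (∫ ω, g j (X i ω) ∂μ) = ∫ y, g j y ∂(μ.map (X i)) :=
      (integral_map (hXm i).aemeasurable
        ((hgmeas j).aestronglyMeasurable.mono_ac (hac i))).symm
    rw [h1, integral_congr_ae ((hac i).ae_eq (hgae j)), hm_push i j]
  have hmbd : ∀ j, 0 ≤ m j ∧ m j ≤ L j := by
    intro j
    set i0 : Fin n := ⟨0, hn⟩
    have hgint : Integrable (fun ω => g j (X i0 ω)) μ :=
      ⟨((hgmeas j).comp (hXm i0)).aestronglyMeasurable,
        HasFiniteIntegral.of_bounded (C := L j) (Filter.Eventually.of_forall fun ω => by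
          rw [Real.norm_eq_abs, abs_of_nonneg (hgbd j (X i0 ω)).1]
          exact (hgbd j (X i0 ω)).2)⟩
    constructor
    · rw [← hgm i0 j]
      exact integral_nonneg fun ω => (hgbd j (X i0 ω)).1
    · rw [← hgm i0 j]
      calc (∫ ω, g j (X i0 ω) ∂μ) ≤ ∫ _ω, L j ∂μ :=
            integral_mono hgint (integrable_const _) fun ω => (hgbd j (X i0 ω)).2
        _ = L j := by simp
  -- constants c, B
  have hinf0 : (0:ℝ) ≤ Finset.univ.inf' ⟨⟨0, hW⟩, Finset.mem_univ _⟩ omt := by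
    refine Finset.le_inf' _ _ fun j _ => ?_
    rw [homt j]
    have := (hLpos j).le
    positivity
  have hc0 : 0 ≤ c := by rw [hc]; exact div_nonneg hinf0 hB.le
  have hcBeq : c * B = Finset.univ.inf' ⟨⟨0, hW⟩, Finset.mem_univ _⟩ omt := by
    rw [hc]; exact div_mul_cancel₀ _ hB.ne'
  have hcBle : ∀ j, c * B ≤ omt j := fun j => by
    rw [hcBeq]; exact Finset.inf'_le _ (Finset.mem_univ j)
  have hcBpos : 0 ≤ c * B := mul_nonneg hc0 hB.le
  -- empirical means
  set Sh : Ω → Fin W → ℝ := fun ω j => (∑ i, h j (X i ω)) / n with hShdef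
  -- F equals the quadratic objective
  have hFQ : ∀ ω (β : Fin W → ℝ), F ω β
      = -2 * (∑ j, β j * Sh ω j) + (∑ i, ∑ j, β i * ψ i j * β j)
        + 2 * (∑ j, ωw j * |β j|) + c * (∑ j, (β j) ^ 2) := by
    intro ω β
    rw [hF ω β]
    have hlin : -(2 / (n : ℝ)) * (∑ i, ∑ j, β j * h j (X i ω))
        = -2 * (∑ j, β j * Sh ω j) := by
      rw [Finset.sum_comm, Finset.mul_sum, Finset.mul_sum]
      refine Finset.sum_congr rfl fun j _ => ?_
      rw [← Finset.mul_sum]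
      simp only [hShdef]
      ring
    have hquad : (∫ y, (∑ j, β j * h j y) ^ 2) = ∑ i, ∑ j, β i * ψ i j * β j := by
      have hpt : ∀ y, (∑ j, β j * h j y) ^ 2
          = ∑ i, ∑ j, (β i * β j) * (h i y * h j y) := by
        intro y
        rw [sq, Finset.sum_mul_sum]
        exact Finset.sum_congr rfl fun i _ => Finset.sum_congr rfl fun j _ => by ring
      rw [integral_congr_ae (Filter.Eventually.of_forall hpt),
        integral_finset_sum _ (fun i _ => integrable_finset_sum _
          (fun j _ => (hIntmul i j).const_mul _))]
      refine Finset.sum_congr rfl fun i _ => ?_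
      rw [integral_finset_sum _ (fun j _ => (hIntmul i j).const_mul _)]
      refine Finset.sum_congr rfl fun j _ => ?_
      rw [integral_const_mul]
      simp only [hψdef]
      ring
    rw [hlin, hquad]
  -- the good event
  set Egood : Set Ω := {ω | ∀ j, |Sh ω j - m j| ≤ Real.sqrt 2 * L j * v} with hEgood
  -- deterministic part
  have hdet : Egood ⊆ {ω | (∑ j, |bhat ω j - bs j|)
      ≤ 288 * Real.sqrt 2 * v * Gs / (Lmin * lW)} := by
    intro ω hω
    have hQ := hmin ω bs
    rw [hFQ ω (bhat ω), hFQ ω bs] at hQ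
    exact csde_det_bound L bs (bhat ω) omt ωw (Sh ω) m ψ Lmin v lW c B Gs
      hLminpos hLminle hvpos hlW hc0 hcBpos hbsB homt hωw hcBle hψsymm
      (fun u => hgram u) (fun j => rfl) hω hGs hQ
  -- bad events
  set Bp : Fin W → Set Ω := fun j =>
    {ω | (n:ℝ) * (Real.sqrt 2 * L j * v) ≤ ∑ i, (g j (X i ω) - m j)} with hBpdef
  set Bm : Fin W → Set Ω := fun j =>
    {ω | (n:ℝ) * (Real.sqrt 2 * L j * v) ≤ ∑ i, (m j - g j (X i ω))} with hBmdef
  set N : Set Ω := ⋃ i, ⋃ j, {ω | g j (X i ω) ≠ h j (X i ω)} with hNdef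
  have hgint : ∀ i j, Integrable (fun ω => g j (X i ω)) μ := fun i j =>
    ⟨((hgmeas j).comp (hXm i)).aestronglyMeasurable,
      HasFiniteIntegral.of_bounded (C := L j) (Filter.Eventually.of_forall fun ω => by
        rw [Real.norm_eq_abs, abs_of_nonneg (hgbd j (X i ω)).1]
        exact (hgbd j (X i ω)).2)⟩
  have hbad : ∀ j : Fin W, μ (Bp j) ≤ ENNReal.ofReal (δ / (2 * W ^ 2))
      ∧ μ (Bm j) ≤ ENNReal.ofReal (δ / (2 * W ^ 2)) := by
    intro j
    have hφp : Measurable (fun x : Fin d → ℝ => g j x - m j) :=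
      (hgmeas j).sub measurable_const
    have hφm : Measurable (fun x : Fin d → ℝ => m j - g j x) :=
      measurable_const.sub (hgmeas j)
    have hindp : iIndepFun
        (fun i (ω : Ω) => g j (X i ω) - m j) μ :=
      hindep.comp (fun _ x => g j x - m j) (fun _ => hφp)
    have hindm : iIndepFun
        (fun i (ω : Ω) => m j - g j (X i ω)) μ :=
      hindep.comp (fun _ x => m j - g j x) (fun _ => hφm)
    have hbddp : ∀ i (ω : Ω), |g j (X i ω) - m j| ≤ L j := by
      intro i ω
      have h1 := hgbd j (X i ω)
      have h2 := hmbd j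
      rw [abs_le]
      constructor <;> linarith [h1.1, h1.2, h2.1, h2.2]
    have hbddm : ∀ i (ω : Ω), |m j - g j (X i ω)| ≤ L j := by
      intro i ω
      rw [abs_sub_comm]
      exact hbddp i ω
    have hmeanp : ∀ i, (∫ ω, (g j (X i ω) - m j) ∂μ) = 0 := by
      intro i
      rw [integral_sub (hgint i j) (integrable_const _), integral_const, hgm i j]
      simp
    have hmeanm : ∀ i, (∫ ω, (m j - g j (X i ω)) ∂μ) = 0 := by
      intro i
      rw [integral_sub (integrable_const _) (hgint i j), integral_const, hgm i j]
      simp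
    constructor
    · have hch := csde_chernoff μ (fun i ω => g j (X i ω) - m j) (L j) (hLpos j)
        (fun i => hφp.comp (hXm i)) hindp hbddp hmeanp v (le_of_lt hvpos)
      rw [hexpval] at hch
      exact hch
    · have hch := csde_chernoff μ (fun i ω => m j - g j (X i ω)) (L j) (hLpos j)
        (fun i => hφm.comp (hXm i)) hindm hbddm hmeanm v (le_of_lt hvpos)
      rw [hexpval] at hch
      exact hch
  have hNnull : μ N = 0 := by
    rw [hNdef]
    refine measure_iUnion_null fun i => measure_iUnion_null fun j => ?_
    exact ae_iff.1 (hcomp i j)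
  -- complement inclusion
  have hEc : Egoodᶜ ⊆ N ∪ (⋃ j : Fin W, (Bp j ∪ Bm j)) := by
    intro ω hω
    by_cases hN' : ∀ (i : Fin n) (j' : Fin W), g j' (X i ω) = h j' (X i ω)
    · right
      have hω' : ¬ ∀ j, |Sh ω j - m j| ≤ Real.sqrt 2 * L j * v := hω
      obtain ⟨j, hj⟩ := not_forall.1 hω'
      have hj' : Real.sqrt 2 * L j * v < |Sh ω j - m j| := not_le.1 hj
      refine Set.mem_iUnion.2 ⟨j, ?_⟩
      have hsum : (∑ i, g j (X i ω)) = ∑ i, h j (X i ω) :=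
        Finset.sum_congr rfl fun i _ => hN' i j
      have hShn : (n:ℝ) * Sh ω j = ∑ i, h j (X i ω) := by
        simp only [hShdef]
        field_simp
      rcases lt_abs.1 hj' with hpos | hneg
      · left
        have e : (∑ i, (g j (X i ω) - m j)) = (n:ℝ) * (Sh ω j - m j) := by
          rw [Finset.sum_sub_distrib, hsum, Finset.sum_const, Finset.card_univ,
            Fintype.card_fin, nsmul_eq_mul, mul_sub, hShn]
        show (n:ℝ) * (Real.sqrt 2 * L j * v) ≤ ∑ i, (g j (X i ω) - m j)
        rw [e]
        exact mul_le_mul_of_nonneg_left (le_of_lt hpos) hnpos.le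
      · right
        have e : (∑ i, (m j - g j (X i ω))) = (n:ℝ) * (m j - Sh ω j) := by
          rw [Finset.sum_sub_distrib, hsum, Finset.sum_const, Finset.card_univ,
            Fintype.card_fin, nsmul_eq_mul, mul_sub, hShn]
        show (n:ℝ) * (Real.sqrt 2 * L j * v) ≤ ∑ i, (m j - g j (X i ω))
        rw [e]
        refine mul_le_mul_of_nonneg_left ?_ hnpos.le
        have : Real.sqrt 2 * L j * v < -(Sh ω j - m j) := hneg
        linarith
    · left
      push_neg at hN'
      obtain ⟨i, j', hij⟩ := hN'
      rw [hNdef]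
      exact Set.mem_iUnion.2 ⟨i, Set.mem_iUnion.2 ⟨j', hij⟩⟩
  -- probability of the complement
  have hEcbound : μ Egoodᶜ ≤ ENNReal.ofReal (δ / W) := by
    have hW0 : (W:ℝ) ≠ 0 := hWpos.ne'
    calc μ Egoodᶜ ≤ μ (N ∪ (⋃ j : Fin W, (Bp j ∪ Bm j))) := measure_mono hEc
      _ ≤ μ N + μ (⋃ j : Fin W, (Bp j ∪ Bm j)) := measure_union_le _ _
      _ = μ (⋃ j : Fin W, (Bp j ∪ Bm j)) := by rw [hNnull, zero_add]
      _ ≤ ∑' j : Fin W, μ (Bp j ∪ Bm j) := measure_iUnion_le _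
      _ = ∑ j : Fin W, μ (Bp j ∪ Bm j) := tsum_fintype _
      _ ≤ ∑ _j : Fin W, (ENNReal.ofReal (δ / (2 * W ^ 2))
            + ENNReal.ofReal (δ / (2 * W ^ 2))) :=
          Finset.sum_le_sum fun j _ => le_trans (measure_union_le _ _)
            (add_le_add (hbad j).1 (hbad j).2)
      _ = ENNReal.ofReal (δ / W) := by
          rw [Finset.sum_const, Finset.card_univ, Fintype.card_fin, nsmul_eq_mul,
            ← ENNReal.ofReal_add (by positivity) (by positivity),
            ← ENNReal.ofReal_natCast W, ← ENNReal.ofReal_mul (Nat.cast_nonneg W)]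
          congr 1
          field_simp
          ring
  -- conclusion
  have hδW1 : δ / W ≤ 1 :=
    le_trans (div_le_self hδ0.le ((Nat.one_le_cast (α := ℝ)).2 hW)) hδ1.le
  have h1 : (1:ENNReal) ≤ μ Egood + μ Egoodᶜ := by
    rw [← measure_univ (μ := μ), ← Set.union_compl_self Egood]
    exact measure_union_le _ _
  have h2 : ENNReal.ofReal (1 - δ / W) + μ Egoodᶜ ≤ μ Egood + μ Egoodᶜ := by
    calc ENNReal.ofReal (1 - δ / W) + μ Egoodᶜ
        ≤ ENNReal.ofReal (1 - δ / W) + ENNReal.ofReal (δ / W) :=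
          add_le_add le_rfl hEcbound
      _ = ENNReal.ofReal 1 := by
          rw [← ENNReal.ofReal_add (by linarith) (by positivity)]
          norm_num
      _ = 1 := ENNReal.ofReal_one
      _ ≤ μ Egood + μ Egoodᶜ := h1
  have hfinal : ENNReal.ofReal (1 - δ / W) ≤ μ Egood :=
    (ENNReal.add_le_add_iff_right (measure_ne_top μ _)).1 h2
  exact le_trans hfinal (measure_mono hdet)
end
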